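/- Let V be a finite linearly ordered set, let 1 ≤ k ≤ |V|, and let G₁=(V,E₁) and G₂=(V,E₂) be edge-disjoint simple graphs on V. Then ε̃_k(G₁ ∪ G₂) ≤ ε̃_k(G₁) + ε̃_k(G₂), where G₁ ∪ G₂ is the graph on V with edge set E₁ ∪ E₂. -/

import Mathlib

open Finset
open scoped symmDiff

/-- The largest eigenvalue of a (symmetric) real matrix, expressed as the supremum
of the set of its real eigenvalues. -/
noncomputable def maxEigenvalue {n : Type*} [Fintype n] (M : Matrix n n ℝ) : ℝ :=
  sSup {μ : ℝ | ∃ x : n → ℝ, x ≠ 0 ∧ M.mulVec x = μ • x}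

/-- `sign(σ,τ) = (−1)^{|{w ∈ σ ∩ τ : u < w < v}|}`, where `u < v` are the two elements
of the symmetric difference `σ ∆ τ` (for `|σ ∆ τ| = 2`, the condition `u < w < v` is
expressed as: some element of `σ ∆ τ` is smaller than `w` and some element is larger). -/
def signPair {V : Type*} [LinearOrder V] (σ τ : Finset V) : ℝ :=
  (-1 : ℝ) ^ ((σ ∩ τ).filter fun w => (∃ a ∈ σ ∆ τ, a < w) ∧ ∃ b ∈ σ ∆ τ, w < b).card

open Classical in
/-- The matrix `M_k(G)`, with rows and columns indexed by the `k`-element subsets of the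
vertex set: the diagonal entry at `σ` is the number of edges meeting `σ`; the entry at
`(σ, τ)` is `−sign(σ,τ)` if `σ ∆ τ` is an edge of `G`; and all other entries vanish. -/
noncomputable def Mk {V : Type*} [Fintype V] [LinearOrder V] (G : SimpleGraph V) (k : ℕ) :
    Matrix {s : Finset V // s.card = k} {s : Finset V // s.card = k} ℝ :=
  fun σ τ =>
    if σ = τ then ((G.edgeFinset.filter fun e => ∃ v ∈ σ.val, v ∈ e).card : ℝ)
    else if ∃ u v : V, G.Adj u v ∧ σ.val ∆ τ.val = {u, v} then -signPair σ.val τ.val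
    else 0

open Classical in
/-- `ε̃_k(G) = λ_1(M_k(G)) − |E(G)|`. (For `k = 0`, `M_0(G)` is the `1 × 1` zero matrix,
so this also yields `ε̃_0(G) = −|E(G)|`.) -/
noncomputable def tEps {V : Type*} [Fintype V] [LinearOrder V] (G : SimpleGraph V)
    (k : ℕ) : ℝ :=
  maxEigenvalue (Mk G k) - G.edgeFinset.card

section Ray
variable {n : Type*} [Fintype n] [DecidableEq n] [Nonempty n]

noncomputable def rq (M : Matrix n n ℝ) : ℝ :=
  ⨆ x : {x : EuclideanSpace ℝ n // x ≠ 0},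
    inner ℝ (Matrix.toEuclideanLin M x) (x : EuclideanSpace ℝ n) / ‖(x : EuclideanSpace ℝ n)‖ ^ 2

lemma rq_bdd (M : Matrix n n ℝ) :
    BddAbove (Set.range fun x : {x : EuclideanSpace ℝ n // x ≠ 0} =>
      inner ℝ (Matrix.toEuclideanLin M x) (x : EuclideanSpace ℝ n) / ‖(x : EuclideanSpace ℝ n)‖ ^ 2) := by
  refine ⟨‖LinearMap.toContinuousLinearMap (Matrix.toEuclideanLin M)‖, ?_⟩
  rintro r ⟨⟨x, hx⟩, rfl⟩
  have hx' : ‖x‖ ≠ 0 := by simpa using hx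
  have hn : (0:ℝ) < ‖x‖ ^ 2 := by positivity
  rw [div_le_iff₀ hn]
  calc inner ℝ (Matrix.toEuclideanLin M x) x
      ≤ ‖Matrix.toEuclideanLin M x‖ * ‖x‖ := real_inner_le_norm _ _
    _ ≤ ‖LinearMap.toContinuousLinearMap (Matrix.toEuclideanLin M)‖ * ‖x‖ * ‖x‖ := by
        have := (LinearMap.toContinuousLinearMap (Matrix.toEuclideanLin M)).le_opNorm x
        exact mul_le_mul_of_nonneg_right this (norm_nonneg x)
    _ = ‖LinearMap.toContinuousLinearMap (Matrix.toEuclideanLin M)‖ * ‖x‖ ^ 2 := by ring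

lemma mulVec_of_euclid {M : Matrix n n ℝ} {μ : ℝ} {x : EuclideanSpace ℝ n}
    (h : Matrix.toEuclideanLin M x = μ • x) :
    M.mulVec ((WithLp.equiv 2 (n → ℝ)) x) = μ • ((WithLp.equiv 2 (n → ℝ)) x) := by
  rw [Matrix.toEuclideanLin_apply] at h
  have := congrArg (WithLp.equiv 2 (n → ℝ)) h
  simpa using this

lemma rq_mem {M : Matrix n n ℝ} (hM : M.IsHermitian) :
    rq M ∈ {μ : ℝ | ∃ x : n → ℝ, x ≠ 0 ∧ M.mulVec x = μ • x} := by
  haveI : Nontrivial (EuclideanSpace ℝ n) := inferInstance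
  have hsym := (Matrix.isHermitian_iff_isSymmetric).mp hM
  have := hsym.hasEigenvalue_iSup_of_finiteDimensional
  obtain ⟨x, hx⟩ := this.exists_hasEigenvector
  refine ⟨(WithLp.equiv 2 (n → ℝ)) x, ?_, ?_⟩
  · simpa using hx.right
  · exact mulVec_of_euclid (by simpa [rq] using hx.apply_eq_smul)


lemma rq_ub {M : Matrix n n ℝ} {μ : ℝ}
    (h : μ ∈ {μ : ℝ | ∃ x : n → ℝ, x ≠ 0 ∧ M.mulVec x = μ • x}) : μ ≤ rq M := by
  obtain ⟨x, hx0, hx⟩ := h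
  set y : EuclideanSpace ℝ n := (WithLp.equiv 2 (n → ℝ)).symm x with hy
  have hy0 : y ≠ 0 := by
    simpa [hy] using hx0
  have hTy : Matrix.toEuclideanLin M y = μ • y := by
    rw [Matrix.toEuclideanLin_apply]
    rw [hy]
    simp [WithLp.equiv_symm_apply, hx]
  have hval : inner ℝ (Matrix.toEuclideanLin M y) (y : EuclideanSpace ℝ n) / ‖y‖ ^ 2 = μ := by
    rw [hTy, real_inner_smul_left, real_inner_self_eq_norm_sq]
    have : ‖y‖ ^ 2 ≠ 0 := by
      have : ‖y‖ ≠ 0 := by simpa using hy0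
      positivity
    field_simp
  calc μ = _ := hval.symm
    _ ≤ rq M := le_ciSup (rq_bdd M) ⟨y, hy0⟩

lemma maxEigenvalue_eq_rq {M : Matrix n n ℝ} (hM : M.IsHermitian) :
    maxEigenvalue M = rq M := by
  apply le_antisymm
  · exact csSup_le ⟨rq M, rq_mem hM⟩ fun μ hμ => rq_ub hμ
  · exact le_csSup ⟨rq M, fun μ hμ => rq_ub hμ⟩ (rq_mem hM)

lemma maxEigenvalue_add_le {A B : Matrix n n ℝ} (hA : A.IsHermitian) (hB : B.IsHermitian) :
    maxEigenvalue (A + B) ≤ maxEigenvalue A + maxEigenvalue B := by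
  rw [maxEigenvalue_eq_rq (hA.add hB), maxEigenvalue_eq_rq hA, maxEigenvalue_eq_rq hB]
  haveI : Nonempty {x : EuclideanSpace ℝ n // x ≠ 0} := by
    obtain ⟨y, hy⟩ := exists_ne (0 : EuclideanSpace ℝ n)
    exact ⟨⟨y, hy⟩⟩
  apply ciSup_le
  intro x
  have : Matrix.toEuclideanLin (A + B) (x : EuclideanSpace ℝ n)
      = Matrix.toEuclideanLin A (x : EuclideanSpace ℝ n)
        + Matrix.toEuclideanLin B (x : EuclideanSpace ℝ n) := by
    rw [map_add]; rfl
  rw [this, inner_add_left, add_div]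
  exact add_le_add (le_ciSup (rq_bdd A) x) (le_ciSup (rq_bdd B) x)

end Ray

lemma signPair_comm {V : Type*} [LinearOrder V] (σ τ : Finset V) :
    signPair τ σ = signPair σ τ := by
  unfold signPair
  rw [Finset.inter_comm, symmDiff_comm]

open Classical in
lemma Mk_isHermitian {V : Type*} [Fintype V] [LinearOrder V] (G : SimpleGraph V) (k : ℕ) :
    (Mk G k).IsHermitian := by
  rw [Matrix.IsHermitian]
  ext σ τ
  rw [Matrix.conjTranspose_apply, star_trivial]
  unfold Mk
  by_cases h : σ = τ
  · subst h; simp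
  · rw [if_neg (Ne.symm h), if_neg h]
    have hc : (∃ u v : V, G.Adj u v ∧ τ.val ∆ σ.val = {u, v})
        ↔ (∃ u v : V, G.Adj u v ∧ σ.val ∆ τ.val = {u, v}) := by
      rw [symmDiff_comm]
    by_cases hc1 : ∃ u v : V, G.Adj u v ∧ σ.val ∆ τ.val = {u, v}
    · rw [if_pos (hc.mpr hc1), if_pos hc1, signPair_comm]
    · rw [if_neg (fun h' => hc1 (hc.mp h')), if_neg hc1]

open Classical in
lemma Mk_add {V : Type*} [Fintype V] [LinearOrder V] (G₁ G₂ : SimpleGraph V)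
    (hdisj : Disjoint G₁.edgeSet G₂.edgeSet) (k : ℕ) :
    Mk (G₁ ⊔ G₂) k = Mk G₁ k + Mk G₂ k := by
  have hdF : Disjoint G₁.edgeFinset G₂.edgeFinset := by
    rw [SimpleGraph.edgeFinset, SimpleGraph.edgeFinset, Set.disjoint_toFinset]
    exact hdisj
  ext σ τ
  rw [Matrix.add_apply]
  unfold Mk
  by_cases h : σ = τ
  · subst h
    simp only [if_pos rfl]
    have cardeq : ∀ (G : SimpleGraph V) (inst : Fintype G.edgeSet) (p : Sym2 V → Prop)
        (ip : DecidablePred p),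
        #(@Finset.filter _ p ip (@SimpleGraph.edgeFinset V G inst))
          = {e | e ∈ G.edgeSet ∧ p e}.ncard := by
      intro G inst p ip
      rw [← Set.ncard_coe_finset, Finset.coe_filter]
      simp [SimpleGraph.mem_edgeFinset]
    simp only [if_true, cardeq]
    have hsplit : {e | e ∈ (G₁ ⊔ G₂).edgeSet ∧ ∃ v ∈ σ.val, v ∈ e}
        = {e | e ∈ G₁.edgeSet ∧ ∃ v ∈ σ.val, v ∈ e} ∪ {e | e ∈ G₂.edgeSet ∧ ∃ v ∈ σ.val, v ∈ e} := by
      ext e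
      simp only [Set.mem_setOf_eq, SimpleGraph.edgeSet_sup, Set.mem_union]
      constructor
      · rintro ⟨he | he, hv⟩
        · exact Or.inl ⟨he, hv⟩
        · exact Or.inr ⟨he, hv⟩
      · rintro (⟨he, hv⟩ | ⟨he, hv⟩)
        · exact ⟨Or.inl he, hv⟩
        · exact ⟨Or.inr he, hv⟩
    rw [hsplit, Set.ncard_union_eq ?_ (Set.toFinite _) (Set.toFinite _)]
    · push_cast; ring
    · exact Set.disjoint_left.mpr fun e he1 he2 =>
        Set.disjoint_left.mp hdisj he1.1 he2.1
  · simp only [if_neg h]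
    have hadj : ∀ u v : V, (G₁ ⊔ G₂).Adj u v ↔ G₁.Adj u v ∨ G₂.Adj u v := fun u v => Iff.rfl
    by_cases h1 : ∃ u v : V, G₁.Adj u v ∧ σ.val ∆ τ.val = {u, v}
    · have h2 : ¬ ∃ u v : V, G₂.Adj u v ∧ σ.val ∆ τ.val = {u, v} := by
        rintro ⟨u', v', ha2, hs2⟩
        obtain ⟨u, v, ha1, hs1⟩ := h1
        have he : ({u, v} : Finset V) = {u', v'} := hs1.symm.trans hs2
        have huv : s(u, v) = s(u', v') := by
          have hu : u = u' ∨ u = v' := by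
            have : u ∈ ({u', v'} : Finset V) := he ▸ Finset.mem_insert_self u {v}
            simpa using this
          have hv : v = u' ∨ v = v' := by
            have : v ∈ ({u', v'} : Finset V) := he ▸ Finset.mem_insert_of_mem (Finset.mem_singleton_self v)
            simpa using this
          rcases hu with hu | hu <;> rcases hv with hv | hv
          · exact absurd (hu.trans hv.symm) ha1.ne
          · rw [hu, hv]
          · rw [hu, hv, Sym2.eq_swap]
          · exact absurd (hu.trans hv.symm) ha1.ne
        have m1 : s(u, v) ∈ G₁.edgeSet := ha1
        have m2 : s(u, v) ∈ G₂.edgeSet := by rw [huv]; exact ha2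
        exact Set.disjoint_left.mp hdisj m1 m2
      have hs : ∃ u v : V, (G₁ ⊔ G₂).Adj u v ∧ σ.val ∆ τ.val = {u, v} := by
        obtain ⟨u, v, ha, hsd⟩ := h1
        exact ⟨u, v, Or.inl ha, hsd⟩
      rw [if_pos hs, if_pos h1, if_neg h2]
      ring
    · by_cases h2 : ∃ u v : V, G₂.Adj u v ∧ σ.val ∆ τ.val = {u, v}
      · have hs : ∃ u v : V, (G₁ ⊔ G₂).Adj u v ∧ σ.val ∆ τ.val = {u, v} := by
          obtain ⟨u, v, ha, hsd⟩ := h2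
          exact ⟨u, v, Or.inr ha, hsd⟩
        rw [if_pos hs, if_neg h1, if_pos h2]
        ring
      · have hs : ¬ ∃ u v : V, (G₁ ⊔ G₂).Adj u v ∧ σ.val ∆ τ.val = {u, v} := by
          rintro ⟨u, v, ha | ha, hsd⟩
          · exact h1 ⟨u, v, ha, hsd⟩
          · exact h2 ⟨u, v, ha, hsd⟩
        rw [if_neg hs, if_neg h1, if_neg h2]
        ring

open Classical in
lemma edgeFinset_card_ncard {V : Type*} [Fintype V] (G : SimpleGraph V)
    (inst : Fintype G.edgeSet) :
    (@SimpleGraph.edgeFinset V G inst).card = G.edgeSet.ncard := by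
  rw [← Set.ncard_coe_finset, SimpleGraph.coe_edgeFinset]

theorem stmt_10 {V : Type*} [Fintype V] [LinearOrder V] (k : ℕ) (hk1 : 1 ≤ k)
    (hkn : k ≤ Fintype.card V) (G₁ G₂ : SimpleGraph V)
    (hdisj : Disjoint G₁.edgeSet G₂.edgeSet) :
    tEps (G₁ ⊔ G₂) k ≤ tEps G₁ k + tEps G₂ k := by
  classical
  haveI : Nonempty {s : Finset V // s.card = k} := by
    obtain ⟨t, -, ht⟩ := Finset.exists_subset_card_eq (s := (Finset.univ : Finset V)) (n := k)
      (by simpa using hkn)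
    exact ⟨⟨t, ht⟩⟩
  unfold tEps
  have hM := Mk_add G₁ G₂ hdisj k
  have hle : maxEigenvalue (Mk (G₁ ⊔ G₂) k) ≤ maxEigenvalue (Mk G₁ k) + maxEigenvalue (Mk G₂ k) := by
    rw [hM]
    exact maxEigenvalue_add_le (Mk_isHermitian G₁ k) (Mk_isHermitian G₂ k)
  simp only [edgeFinset_card_ncard]
  have hcard : (G₁ ⊔ G₂).edgeSet.ncard = G₁.edgeSet.ncard + G₂.edgeSet.ncard := by
    rw [show (G₁ ⊔ G₂).edgeSet = G₁.edgeSet ∪ G₂.edgeSet from SimpleGraph.edgeSet_sup G₁ G₂,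
      Set.ncard_union_eq hdisj (Set.toFinite _) (Set.toFinite _)]
  rw [hcard]
  push_cast
  linarith
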